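/- Let x ∈ ℝ², let A be an invertible real 2×2 matrix, and let ξ ∈ D_T. Then, for almost every (ω, ω₃) ∈ ℝ² × ℝ, (σ₂[x,A] (T (σ₂[−A⁻¹x, A⁻¹] ξ)))(ω, ω₃) = |det A|^{−1/2} · ‖ω‖⁻¹ · |ω₃|^{−1/2} · ξ(ω, ω₃). In other words, σ₂[x,A] T σ₂[x,A]* = Δ_{G₂}[x,A]^{1/2} · T, where σ₂[x,A]* = σ₂[x,A]⁻¹ = σ₂[−A⁻¹x, A⁻¹] and Δ_{G₂}[x,A] = |det A|⁻¹; i.e., T is semi-invariant with weight Δ_{G₂}^{1/2} for σ₂. -/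

import Mathlib

open MeasureTheory Matrix
open scoped ENNReal

set_option maxHeartbeats 1000000

noncomputable section

/-- `‖ω‖²`, the squared Euclidean norm of the row vector `ω`. -/
def nsq (ω : Fin 2 → ℝ) : ℝ := ω 0 ^ 2 + ω 1 ^ 2

/-- `u_{ω,A}` for a row vector `ω = (ω 0, ω 1)` and a matrix
`A = [[a, b], [c, d]] = [[A 0 0, A 0 1], [A 1 0, A 1 1]]`. -/
def uu (ω : Fin 2 → ℝ) (A : Matrix (Fin 2) (Fin 2) ℝ) : ℝ :=
  ((A 0 0 * A 1 0 + A 0 1 * A 1 1) * (ω 0 ^ 2 - ω 1 ^ 2)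
      - (A 0 0 ^ 2 + A 0 1 ^ 2 - A 1 0 ^ 2 - A 1 1 ^ 2) * (ω 0 * ω 1))
    / ((A 0 0 * ω 0 + A 1 0 * ω 1) ^ 2 + (A 0 1 * ω 0 + A 1 1 * ω 1) ^ 2)

/-- `v_{ω,A}`. -/
def vv (ω : Fin 2 → ℝ) (A : Matrix (Fin 2) (Fin 2) ℝ) : ℝ :=
  ((A 0 0 * A 1 1 - A 0 1 * A 1 0) * (ω 0 ^ 2 + ω 1 ^ 2))
    / ((A 0 0 * ω 0 + A 1 0 * ω 1) ^ 2 + (A 0 1 * ω 0 + A 1 1 * ω 1) ^ 2)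

/-- The operator `σ₂[x,A]` on functions of `(ω, ω₃) ∈ ℝ² × ℝ`:
`(σ₂[x,A]ξ)(ω, ω₃) = (|det A|·‖ω‖/‖ωA‖)·e^{2πi(ω·x + ω₃·u_{ω,A})}·ξ(ωA, ω₃·v_{ω,A})`. -/
def sigma2 (x : Fin 2 → ℝ) (A : Matrix (Fin 2) (Fin 2) ℝ)
    (ξ : (Fin 2 → ℝ) × ℝ → ℂ) : (Fin 2 → ℝ) × ℝ → ℂ := fun p =>
  (((|A.det| * Real.sqrt (nsq p.1) / Real.sqrt (nsq (vecMul p.1 A))) : ℝ) : ℂ)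
    * Complex.exp (((2 * Real.pi * (p.1 0 * x 0 + p.1 1 * x 1 + p.2 * uu p.1 A)) : ℝ) * Complex.I)
    * ξ (vecMul p.1 A, p.2 * vv p.1 A)

/-- The multiplication operator `(Tξ)(ω, ω₃) = ‖ω‖⁻¹·|ω₃|^{−1/2}·ξ(ω, ω₃)`. -/
def Tmul (ξ : (Fin 2 → ℝ) × ℝ → ℂ) : (Fin 2 → ℝ) × ℝ → ℂ := fun p =>
  ((((Real.sqrt (nsq p.1))⁻¹ * (Real.sqrt |p.2|)⁻¹) : ℝ) : ℂ) * ξ p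

lemma exp_mul_exp_of_add_eq_zero (r1 r2 : ℝ) (h : r1 + r2 = 0) :
    Complex.exp ((r1 : ℂ) * Complex.I) * Complex.exp ((r2 : ℂ) * Complex.I) = 1 := by
  rw [← Complex.exp_add, ← add_mul, ← Complex.ofReal_add, h]
  simp

lemma key_combine (k1 t2 k2 r : ℝ) (e1 e2 z : ℂ) (he : e1 * e2 = 1)
    (hk : k1 * t2 * k2 = r) :
    (k1 : ℂ) * e1 * ((t2 : ℂ) * ((k2 : ℂ) * e2 * z)) = (r : ℂ) * z := by
  have h1 : (k1 : ℂ) * e1 * ((t2 : ℂ) * ((k2 : ℂ) * e2 * z))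
      = (((k1 * t2 * k2 : ℝ)) : ℂ) * (e1 * e2) * z := by push_cast; ring
  rw [h1, he, hk, mul_one]

lemma pointwise_id (x : Fin 2 → ℝ) (A : Matrix (Fin 2) (Fin 2) ℝ) (hA : A.det ≠ 0)
    (ξ : (Fin 2 → ℝ) × ℝ → ℂ) (ω : Fin 2 → ℝ) (t : ℝ) (hp : ω ≠ 0) :
    sigma2 x A (Tmul (sigma2 (-(A⁻¹.mulVec x)) A⁻¹ ξ)) (ω, t)
      = ((((Real.sqrt |A.det|)⁻¹ * (Real.sqrt (nsq ω))⁻¹ * (Real.sqrt |t|)⁻¹) : ℝ) : ℂ)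
          * ξ (ω, t) := by
  set a := A 0 0 with ha
  set b := A 0 1 with hb
  set c := A 1 0 with hc
  set d := A 1 1 with hd
  have hdet : A.det = a * d - b * c := Matrix.det_fin_two A
  have hdet' : a * d - b * c ≠ 0 := hdet ▸ hA
  have hBdef : A⁻¹ = (A.det)⁻¹ • !![d, -b; -c, a] := by
    rw [Matrix.inv_def, Matrix.adjugate_fin_two, Ring.inverse_eq_inv']
  have hB00 : A⁻¹ 0 0 = (a * d - b * c)⁻¹ * d := by rw [hBdef, hdet]; simp
  have hB01 : A⁻¹ 0 1 = (a * d - b * c)⁻¹ * (-b) := by rw [hBdef, hdet]; simp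
  have hB10 : A⁻¹ 1 0 = (a * d - b * c)⁻¹ * (-c) := by rw [hBdef, hdet]; simp
  have hB11 : A⁻¹ 1 1 = (a * d - b * c)⁻¹ * a := by rw [hBdef, hdet]; simp
  have hw0 : vecMul ω A 0 = ω 0 * a + ω 1 * c := by
    simp [Matrix.vecMul, dotProduct, Fin.sum_univ_two]; rfl
  have hw1 : vecMul ω A 1 = ω 0 * b + ω 1 * d := by
    simp [Matrix.vecMul, dotProduct, Fin.sum_univ_two]; rfl
  have hi : ω 0 ≠ 0 ∨ ω 1 ≠ 0 := by
    by_contra h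
    push_neg at h
    exact hp (by funext i; fin_cases i <;> simp [h.1, h.2])
  have hN : (0:ℝ) < ω 0 ^ 2 + ω 1 ^ 2 := by
    rcases hi with h | h
    · have : 0 < ω 0 ^ 2 := by positivity
      nlinarith [sq_nonneg (ω 1)]
    · have : 0 < ω 1 ^ 2 := by positivity
      nlinarith [sq_nonneg (ω 0)]
  have hM0 : (a * ω 0 + c * ω 1) ^ 2 + (b * ω 0 + d * ω 1) ^ 2 ≠ 0 := by
    intro h
    have h1 : a * ω 0 + c * ω 1 = 0 := by
      nlinarith [sq_nonneg (a * ω 0 + c * ω 1), sq_nonneg (b * ω 0 + d * ω 1)]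
    have h2 : b * ω 0 + d * ω 1 = 0 := by
      nlinarith [sq_nonneg (a * ω 0 + c * ω 1), sq_nonneg (b * ω 0 + d * ω 1)]
    have hx0 : ω 0 = 0 := by
      have h3 : (a * d - b * c) * ω 0 = d * (a * ω 0 + c * ω 1) - c * (b * ω 0 + d * ω 1) := by
        ring
      rw [h1, h2] at h3
      simpa [hdet'] using mul_eq_zero.mp (by linarith : (a * d - b * c) * ω 0 = 0)
    have hx1 : ω 1 = 0 := by
      have h3 : (a * d - b * c) * ω 1 = a * (b * ω 0 + d * ω 1) - b * (a * ω 0 + c * ω 1) := by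
        ring
      rw [h1, h2] at h3
      simpa [hdet'] using mul_eq_zero.mp (by linarith : (a * d - b * c) * ω 1 = 0)
    nlinarith
  have hM : (0:ℝ) < (a * ω 0 + c * ω 1) ^ 2 + (b * ω 0 + d * ω 1) ^ 2 :=
    lt_of_le_of_ne (by positivity) (Ne.symm hM0)
  have hden : (A⁻¹ 0 0 * vecMul ω A 0 + A⁻¹ 1 0 * vecMul ω A 1) ^ 2
      + (A⁻¹ 0 1 * vecMul ω A 0 + A⁻¹ 1 1 * vecMul ω A 1) ^ 2 = ω 0 ^ 2 + ω 1 ^ 2 := by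
    rw [hB00, hB01, hB10, hB11, hw0, hw1]
    field_simp
    ring
  have huv : uu ω A + vv ω A * uu (vecMul ω A) A⁻¹ = 0 := by
    simp only [uu, vv]
    rw [hden, hB00, hB01, hB10, hB11, hw0, hw1]
    field_simp
    ring
  have hvv' : vv (vecMul ω A) A⁻¹
      = ((a * ω 0 + c * ω 1) ^ 2 + (b * ω 0 + d * ω 1) ^ 2)
        / ((a * d - b * c) * (ω 0 ^ 2 + ω 1 ^ 2)) := by
    simp only [vv]
    rw [hden, hB00, hB01, hB10, hB11, hw0, hw1]
    field_simp
  have ht : t * vv ω A * vv (vecMul ω A) A⁻¹ = t := by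
    rw [hvv']
    simp only [vv, ← ha, ← hb, ← hc, ← hd]
    field_simp
  have hback : vecMul (vecMul ω A) A⁻¹ = ω := by
    rw [Matrix.vecMul_vecMul, Matrix.mul_nonsing_inv A (isUnit_iff_ne_zero.mpr hA),
      Matrix.vecMul_one]
  have hmv0 : A⁻¹.mulVec x 0 = A⁻¹ 0 0 * x 0 + A⁻¹ 0 1 * x 1 := by
    simp [Matrix.mulVec, dotProduct, Fin.sum_univ_two]
  have hmv1 : A⁻¹.mulVec x 1 = A⁻¹ 1 0 * x 0 + A⁻¹ 1 1 * x 1 := by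
    simp [Matrix.mulVec, dotProduct, Fin.sum_univ_two]
  have hxp : vecMul ω A 0 * (-(A⁻¹.mulVec x)) 0 + vecMul ω A 1 * (-(A⁻¹.mulVec x)) 1
      = -(ω 0 * x 0 + ω 1 * x 1) := by
    simp only [Pi.neg_apply, hmv0, hmv1, hw0, hw1, hB00, hB01, hB10, hB11]
    have hdet'' : a * d - c * b ≠ 0 := by rwa [mul_comm c b]
    field_simp
    ring
  have hnsqA : nsq (vecMul ω A) = (a * ω 0 + c * ω 1) ^ 2 + (b * ω 0 + d * ω 1) ^ 2 := by
    simp only [nsq, hw0, hw1]; ring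
  have habsinv : |A⁻¹.det| = |A.det|⁻¹ := by
    rw [Matrix.det_nonsing_inv, Ring.inverse_eq_inv', abs_inv]
  have hvA : vv ω A = (a * d - b * c) * (ω 0 ^ 2 + ω 1 ^ 2)
      / ((a * ω 0 + c * ω 1) ^ 2 + (b * ω 0 + d * ω 1) ^ 2) := rfl
  have habs : |t * vv ω A| = |t| * (|A.det|
      * ((ω 0 ^ 2 + ω 1 ^ 2) / ((a * ω 0 + c * ω 1) ^ 2 + (b * ω 0 + d * ω 1) ^ 2))) := by
    rw [hvA, hdet, abs_mul, abs_div, abs_mul, abs_of_pos hN, abs_of_pos hM, mul_div_assoc]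
  have hs : Real.sqrt |t * vv ω A| = Real.sqrt |t| * (Real.sqrt |A.det|
      * (Real.sqrt (ω 0 ^ 2 + ω 1 ^ 2)
        / Real.sqrt ((a * ω 0 + c * ω 1) ^ 2 + (b * ω 0 + d * ω 1) ^ 2))) := by
    rw [habs, Real.sqrt_mul (abs_nonneg t), Real.sqrt_mul (abs_nonneg A.det),
      Real.sqrt_div (le_of_lt hN)]
  have hsc : |A.det| * Real.sqrt (nsq ω) / Real.sqrt (nsq (vecMul ω A))
      * ((Real.sqrt (nsq (vecMul ω A)))⁻¹ * (Real.sqrt |t * vv ω A|)⁻¹)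
      * (|A⁻¹.det| * Real.sqrt (nsq (vecMul ω A)) / Real.sqrt (nsq ω))
      = (Real.sqrt |A.det|)⁻¹ * (Real.sqrt (nsq ω))⁻¹ * (Real.sqrt |t|)⁻¹ := by
    have hnsqω : nsq ω = ω 0 ^ 2 + ω 1 ^ 2 := rfl
    rw [hnsqA, hnsqω, habsinv, hs]
    have hsN : 0 < Real.sqrt (ω 0 ^ 2 + ω 1 ^ 2) := Real.sqrt_pos.mpr hN
    have hsM : 0 < Real.sqrt ((a * ω 0 + c * ω 1) ^ 2 + (b * ω 0 + d * ω 1) ^ 2) :=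
      Real.sqrt_pos.mpr hM
    have hsD : 0 < Real.sqrt |A.det| := Real.sqrt_pos.mpr (abs_pos.mpr hA)
    have hDsq : Real.sqrt |A.det| ^ 2 = |A.det| := Real.sq_sqrt (abs_nonneg _)
    rw [← hDsq]
    rcases eq_or_lt_of_le (Real.sqrt_nonneg |t|) with h0 | h0
    · rw [← h0]; simp
    · have hsM' := hsM.ne'
      set S := Real.sqrt ((a * ω 0 + c * ω 1) ^ 2 + (b * ω 0 + d * ω 1) ^ 2)
      field_simp
  have hphase := exp_mul_exp_of_add_eq_zero
    (2 * Real.pi * (ω 0 * x 0 + ω 1 * x 1 + t * uu ω A))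
    (2 * Real.pi * (vecMul ω A 0 * (-(A⁻¹.mulVec x)) 0 + vecMul ω A 1 * (-(A⁻¹.mulVec x)) 1
      + t * vv ω A * uu (vecMul ω A) A⁻¹))
    (by linear_combination 2 * Real.pi * hxp + 2 * Real.pi * t * huv)
  simp only [sigma2, Tmul]
  rw [hback, ht]
  exact key_combine _ _ _ _ _ _ _ hphase hsc

/-- Semi-invariance of `T` with weight `Δ_{G₂}^{1/2}`:
`σ₂[x,A] T σ₂[x,A]* ξ = |det A|^{−1/2} T ξ` for `ξ ∈ D_T`,
where `σ₂[x,A]* = σ₂[x,A]⁻¹ = σ₂[−A⁻¹x, A⁻¹]`. -/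
theorem T_semi_invariant (x : Fin 2 → ℝ) (A : Matrix (Fin 2) (Fin 2) ℝ)
    (hA : A.det ≠ 0) (ξ : (Fin 2 → ℝ) × ℝ → ℂ)
    (hξ : MemLp ξ 2 (volume : Measure ((Fin 2 → ℝ) × ℝ)))
    (hξT : ∫⁻ p : (Fin 2 → ℝ) × ℝ,
        (‖ξ p‖₊ : ℝ≥0∞) ^ 2 * ENNReal.ofReal (nsq p.1 * |p.2|)⁻¹ < ⊤) :
    ∀ᵐ p : (Fin 2 → ℝ) × ℝ ∂(volume : Measure ((Fin 2 → ℝ) × ℝ)),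
      sigma2 x A (Tmul (sigma2 (-(A⁻¹.mulVec x)) A⁻¹ ξ)) p
        = ((((Real.sqrt |A.det|)⁻¹ * (Real.sqrt (nsq p.1))⁻¹ * (Real.sqrt |p.2|)⁻¹) : ℝ) : ℂ)
            * ξ p := by
  have hae : ∀ᵐ p : (Fin 2 → ℝ) × ℝ ∂(volume : Measure ((Fin 2 → ℝ) × ℝ)), p.1 ≠ 0 := by
    have h : volume {p : (Fin 2 → ℝ) × ℝ | p.1 = 0} = 0 := by
      rw [Measure.volume_eq_prod]
      have he : {p : (Fin 2 → ℝ) × ℝ | p.1 = 0} = ({0} : Set (Fin 2 → ℝ)) ×ˢ Set.univ := by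
        ext p; simp [Set.mem_prod, Prod.ext_iff, eq_comm]
      rw [he, Measure.prod_prod, measure_singleton, zero_mul]
    rw [ae_iff]; simpa using h
  filter_upwards [hae] with p hp
  obtain ⟨ω, t⟩ := p
  exact pointwise_id x A hA ξ ω t hp
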